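/- arXiv:1812.04413 — 6 statements merged into one kernel-verified Lean document; each statement's English description precedes it below -/
import Mathlib

section
/- Let W be a set and R an Euclidean binary relation on W such that the structure is R-connected. Then every inner world w is reflexive (R w w holds), and the set of all inner worlds forms an R-clique: any two inner worlds w₁, w₂ satisfy R w₁ w₂ and R w₂ w₁. -/
/-- In an `R`-connected Euclidean structure, every inner world is reflexive and
the set of inner worlds forms an `R`-clique. -/
theorem euclidean_connected_inner_clique {W : Type*} {R : W → W → Prop}
    (hEucl : ∀ x y z : W, R x y → R x z → R y z)
    (hConn : ∀ a b : W, Relation.ReflTransGen (fun x y => R x y ∨ R y x) a b) :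
    (∀ w : W, (∃ w' : W, R w' w) → R w w) ∧
    (∀ w₁ w₂ : W, (∃ v : W, R v w₁) → (∃ v : W, R v w₂) → R w₁ w₂ ∧ R w₂ w₁) := by
  have refl : ∀ w : W, (∃ w', R w' w) → R w w := fun w ⟨v, hv⟩ => hEucl v w w hv hv
  refine ⟨refl, ?_⟩
  intro w₁ w₂ h₁ h₂
  have key : ∀ a b : W, Relation.ReflTransGen (fun x y => R x y ∨ R y x) a b →
      ∀ u, (∃ p, R p u) → (u = a ∨ R a u) →
      ∀ v, (∃ p, R p v) → (v = b ∨ R b v) → R u v ∧ R v u := by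
    intro a b h
    induction h with
    | refl =>
      rintro u hu (rfl | hau) v hv (rfl | hav)
      · exact ⟨refl _ hu, refl _ hu⟩
      · exact ⟨hav, hEucl _ v _ hav (refl _ hu)⟩
      · exact ⟨hEucl _ u _ hau (refl _ hv), hau⟩
      · exact ⟨hEucl _ u v hau hav, hEucl _ v u hav hau⟩
    | @tail m c hab e ih =>
      rintro u hu hua v hv hvc
      rcases e with hbc | hcb
      · have hc : ∃ p, R p c := ⟨m, hbc⟩
        have huc : R u c ∧ R c u := ih u hu hua c hc (Or.inr hbc)
        have hcv : R c v ∧ R v c := by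
          rcases hvc with rfl | hcv
          · exact ⟨refl v hv, refl v hv⟩
          · exact ⟨hcv, hEucl c v c hcv (refl c hc)⟩
        exact ⟨hEucl c u v huc.2 hcv.1, hEucl c v u hcv.1 huc.2⟩
      · have hb : ∃ p, R p m := ⟨c, hcb⟩
        have hub : R u m ∧ R m u := ih u hu hua m hb (Or.inl rfl)
        have hmv : R m v ∧ R v m := by
          rcases hvc with rfl | hcv
          · exact ⟨hEucl v m v hcb (refl v hv), hcb⟩
          · exact ⟨hEucl c m v hcb hcv, hEucl c v m hcv hcb⟩
        exact ⟨hEucl m u v hub.2 hmv.1, hEucl m v u hmv.1 hub.2⟩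
  exact key w₁ w₂ (hConn w₁ w₂) w₁ h₁ (Or.inl rfl) w₂ h₂ (Or.inl rfl)
end

section
/- Let W be a set and R a Euclidean binary relation on W such that the structure is R-connected and R is nonempty. Then the composed relation R ∘ R ∘ R⁻¹ is the universal relation on W: for all a, b ∈ W there exist x, y ∈ W with R a x, R x y, and R b y. -/
/-- In an `R`-connected Euclidean structure with nonempty `R`, the relation
`R ∘ R ∘ R⁻¹` is universal. -/
theorem euclidean_connected_composition_universal {W : Type*} {R : W → W → Prop}
    (hEucl : ∀ x y z : W, R x y → R x z → R y z)
    (hConn : ∀ a b : W, Relation.ReflTransGen (fun x y => R x y ∨ R y x) a b)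
    (hNe : ∃ a b : W, R a b) :
    ∀ a b : W, ∃ x y : W, R a x ∧ R x y ∧ R b y := by
  -- Key lemma: successors of connected points are mutually related
  have key : ∀ a b : W, Relation.ReflTransGen (fun x y => R x y ∨ R y x) a b →
      ∀ x y : W, R a x → R b y → R x y ∧ R y x := by
    intro a b h
    induction h with
    | refl => intro x y hx hy; exact ⟨hEucl _ _ _ hx hy, hEucl _ _ _ hy hx⟩
    | tail _ hstep ih =>
      rename_i c b _
      intro x y hx hy
      rcases hstep with hcb | hbc
      · have h1 := ih x b hx hcb
        exact ⟨hEucl _ _ _ h1.2 hy, hEucl _ _ _ hy h1.2⟩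
      · have hcc : R c c := hEucl _ _ _ hbc hbc
        have h1 := ih x c hx hcc
        have hcy : R c y := hEucl _ _ _ hbc hy
        exact ⟨hEucl _ _ _ h1.2 hcy, hEucl _ _ _ hcy h1.2⟩
  -- Seriality: every point has a successor
  obtain ⟨a₀, b₀, h₀⟩ := hNe
  have ser : ∀ a : W, ∃ x : W, R a x := by
    intro a
    rcases (hConn a a₀).cases_head with heq | ⟨c, hstep, _⟩
    · exact ⟨b₀, heq ▸ h₀⟩
    · rcases hstep with h | h
      · exact ⟨c, h⟩
      · exact ⟨a, hEucl _ _ _ h h⟩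
  intro a b
  obtain ⟨x, hx⟩ := ser a
  obtain ⟨y, hy⟩ := ser b
  exact ⟨x, y, hx, (key a b (hConn a b) x y hx hy).1, hy⟩
end

section
/- Let W be a set, R a Euclidean binary relation on W such that the structure is R-connected, let P ⊆ W, and let w₀ ∈ W. Then the following are equivalent: (i) w₀ ∈ P and for all x, y, z ∈ W, if R w₀ x, R x y, and R z y, then z ∈ P; (ii) P = W. (This is the set-theoretic form of the statement that the universal modality is definable as Uφ := φ ∧ ◻◻⊟φ over connected Euclidean frames: w₀ satisfies φ ∧ ◻◻⊟φ iff φ holds at every world.) -/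
/-- Over connected Euclidean frames the universal modality is definable as
`Uφ := φ ∧ ◻◻⊟φ`: with `P` the set of worlds satisfying `φ`, a world `w₀`
satisfies `φ ∧ ◻◻⊟φ` iff `φ` holds at every world. -/
theorem euclidean_universal_modality_definable {W : Type*} {R : W → W → Prop}
    (hEucl : ∀ x y z : W, R x y → R x z → R y z)
    (hConn : ∀ a b : W, Relation.ReflTransGen (fun x y => R x y ∨ R y x) a b)
    (P : Set W) (w₀ : W) :
    (w₀ ∈ P ∧ ∀ x y z : W, R w₀ x → R x y → R z y → z ∈ P) ↔ (∀ w : W, w ∈ P) := by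
  constructor
  · rintro ⟨hP, hBox⟩ w
    suffices h : w ∈ P ∧ ∀ x y z : W, R w x → R x y → R z y → z ∈ P from h.1
    induction hConn w₀ w with
    | refl => exact ⟨hP, hBox⟩
    | tail hab hbc ih =>
      obtain ⟨hbP, hb⟩ := ih
      rcases hbc with h1 | h2
      · -- R b c
        have hcc := hEucl _ _ _ h1 h1
        refine ⟨hb _ _ _ h1 hcc hcc, ?_⟩
        intro x y z hcx hxy hzy
        have hxc := hEucl _ _ _ hcx hcc
        have hcy := hEucl _ _ _ hxc hxy
        exact hb _ _ _ h1 hcy hzy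
      · -- R c b
        have hbb := hEucl _ _ _ h2 h2
        refine ⟨hb _ _ _ hbb hbb h2, ?_⟩
        intro x y z hcx hxy hzy
        exact hb _ _ _ (hEucl _ _ _ h2 hcx) hxy hzy
  · intro h
    exact ⟨h w₀, fun x y z _ _ _ => h z⟩
end

section
/- Let W be a set and R a transitive Euclidean binary relation on W such that the structure is R-connected. Then every lantern illuminates every inner world: if l ∈ W has no R-predecessor and q ∈ W has an R-predecessor, then R l q holds. -/
/-- In an `R`-connected transitive Euclidean structure, every lantern illuminates
every inner world. -/
theorem trans_euclidean_lantern_illuminates {W : Type*} {R : W → W → Prop}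
    (hTrans : ∀ x y z : W, R x y → R y z → R x z)
    (hEucl : ∀ x y z : W, R x y → R x z → R y z)
    (hConn : ∀ a b : W, Relation.ReflTransGen (fun x y => R x y ∨ R y x) a b)
    {l q : W} (hl : ∀ w' : W, ¬ R w' l) (hq : ∃ w' : W, R w' q) :
    R l q := by
  suffices h : ((∃ w, R w q) → R l q) ∧ (∀ y, R q y → R l y) from h.1 hq
  clear hq
  induction hConn l q with
  | refl =>
    exact ⟨fun ⟨w, hw⟩ => absurd hw (hl w), fun y hy => hy⟩
  | tail hpath hstep ih =>
    rename_i b c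
    rcases hstep with hbc | hcb
    · -- R b c
      have hlc : R l c := ih.2 c hbc
      exact ⟨fun _ => hlc, fun y hy => hTrans _ _ _ hlc hy⟩
    · -- R c b
      have hlb : R l b := ih.1 ⟨c, hcb⟩
      constructor
      · rintro ⟨w, hwc⟩
        have hwb : R w b := hTrans _ _ _ hwc hcb
        have hbc : R b c := hEucl _ _ _ hwb hwc
        exact hTrans _ _ _ hlb hbc
      · intro y hcy
        have hby : R b y := hEucl _ _ _ hcb hcy
        exact hTrans _ _ _ hlb hby
end

section
/- Let W be a nonempty set and R a Euclidean binary relation on W such that the structure is R-connected. Then R is serial (every world has an R-successor) if and only if W contains at least one inner (i.e., non-lantern) world. -/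
/-- An `R`-connected Euclidean structure on a nonempty set is serial iff it
contains at least one inner (non-lantern) world. -/
theorem euclidean_serial_iff_inner_exists {W : Type*} [Nonempty W] {R : W → W → Prop}
    (hEucl : ∀ x y z : W, R x y → R x z → R y z)
    (hConn : ∀ a b : W, Relation.ReflTransGen (fun x y => R x y ∨ R y x) a b) :
    (∀ w : W, ∃ v : W, R w v) ↔ (∃ w : W, ∃ w' : W, R w' w) := by
  constructor
  · intro h
    obtain ⟨w⟩ := ‹Nonempty W›
    obtain ⟨v, hv⟩ := h w
    exact ⟨v, w, hv⟩
  · rintro ⟨w, w', hw⟩ x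
    have hww : R w w := hEucl w' w w hw hw
    have : ∀ b, Relation.ReflTransGen (fun x y => R x y ∨ R y x) w b → ∃ v, R b v := by
      intro b hb
      induction hb with
      | refl => exact ⟨w, hww⟩
      | tail hab hstep ih =>
        rcases hstep with h1 | h1
        · exact ⟨_, hEucl _ _ _ h1 h1⟩
        · exact ⟨_, h1⟩
    exact this x (hConn w x)
end

section
/- The formula ⟟p ∧ ⟟¬p ∧ ⋄≤₁⊤ of the modal language (⋄≥, ⟟) is globally satisfiable over arbitrary frames but has no finite global models. In relational terms: (i) there exist a set W, a binary relation R on W, and a subset P ⊆ W such that every w ∈ W has at most one R-successor, has some R-predecessor belonging to P, and has some R-predecessor not belonging to P; (ii) there is no such triple (W, R, P) with W finite and nonempty. -/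
/-- The formula `⟟p ∧ ⟟¬p ∧ ⋄≤₁⊤` is globally satisfiable (over arbitrary
frames) but has no finite global models.  In relational terms, with `P` the set
of worlds where `p` holds: every world has at most one `R`-successor, some
`R`-predecessor in `P`, and some `R`-predecessor outside `P`. -/
theorem no_global_finite_model_example :
    (∃ (W : Type) (R : W → W → Prop) (P : Set W), Nonempty W ∧
      ∀ w : W,
        (∀ u v : W, R w u → R w v → u = v) ∧
        (∃ w' : W, R w' w ∧ w' ∈ P) ∧
        (∃ w' : W, R w' w ∧ w' ∉ P)) ∧
    ¬ (∃ (W : Type) (R : W → W → Prop) (P : Set W), Finite W ∧ Nonempty W ∧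
      ∀ w : W,
        (∀ u v : W, R w u → R w v → u = v) ∧
        (∃ w' : W, R w' w ∧ w' ∈ P) ∧
        (∃ w' : W, R w' w ∧ w' ∉ P)) := by
  constructor
  · refine ⟨List Bool, fun x y => y = x.tail, {l | l.head? = some true},
      ⟨[]⟩, fun w => ⟨fun u v hu hv => hu.trans hv.symm, ⟨true :: w, rfl, rfl⟩,
      ⟨false :: w, rfl, ?_⟩⟩⟩
    simp [Set.mem_setOf_eq]
  · rintro ⟨W, R, P, hFin, hNe, h⟩
    classical
    choose f hf hfP using fun w => (h w).2.1
    choose g hg hgP using fun w => (h w).2.2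
    have hinj : Function.Injective (fun x : W ⊕ W => Sum.elim f g x) := by
      rintro (a | a) (b | b) hab <;> simp only [Sum.elim_inl, Sum.elim_inr] at hab
      · exact congrArg Sum.inl ((h (f a)).1 a b (hf a) (hab ▸ hf b))
      · exact absurd (hab ▸ hfP a) (hgP b)
      · exact absurd (hab.symm ▸ hfP b) (hgP a)
      · exact congrArg Sum.inr ((h (g a)).1 a b (hg a) (hab ▸ hg b))
    have := Nat.card_le_card_of_injective _ hinj
    rw [Nat.card_sum] at this
    have h1 : 1 ≤ Nat.card W := Nat.one_le_iff_ne_zero.mpr (Nat.card_ne_zero.mpr ⟨hNe, hFin⟩)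
    omega
end
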